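/- Let η be differentiable at every point of s, nonvanishing on s, and satisfy (Lη)(x) + q(x)·η(x) = 0 for all x ∈ s. Let φ₁, …, φₘ : X → ℝ be differentiable at every point of s with (Lφᵢ)(x) = 0 for all x ∈ s and all i, and let f : ℝᵐ → ℝ be differentiable. Then the function ψ(x) = η(x) · f(φ₁(x), …, φₘ(x)) satisfies (Lψ)(x) + q(x)·ψ(x) = 0 for all x ∈ s. -/

import Mathlib

/-- If Lφᵢ = 0 on s for each i and (L+q)η = 0 on s, then ψ = η·f(φ₁,…,φₘ)
solves (L+q)ψ = 0 on s. -/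
theorem general_solution_nonhomogeneous
    {X : Type*} [NormedAddCommGroup X] [NormedSpace ℝ X]
    (s : Set X) (hs : IsOpen s) (a : X → X) (q : X → ℝ) (η : X → ℝ)
    (hηd : ∀ x ∈ s, DifferentiableAt ℝ η x)
    (hη0 : ∀ x ∈ s, η x ≠ 0)
    (hηeq : ∀ x ∈ s, fderiv ℝ η x (a x) + q x * η x = 0)
    (m : ℕ) (φ : Fin m → X → ℝ)
    (hφd : ∀ i, ∀ x ∈ s, DifferentiableAt ℝ (φ i) x)
    (hφeq : ∀ i, ∀ x ∈ s, fderiv ℝ (φ i) x (a x) = 0)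
    (f : (Fin m → ℝ) → ℝ) (hf : Differentiable ℝ f) :
    ∀ x ∈ s,
      fderiv ℝ (fun y => η y * f (fun i => φ i y)) x (a x)
          + q x * (η x * f (fun i => φ i x)) = 0 := by
  intro x hx
  have hΦ : DifferentiableAt ℝ (fun y => fun i => φ i y) x :=
    differentiableAt_pi.2 fun i => hφd i x hx
  have hF : DifferentiableAt ℝ (fun y => f (fun i => φ i y)) x :=
    (hf _).comp x hΦ
  have hcomp : fderiv ℝ (fun y => f (fun i => φ i y)) x (a x) = 0 := by
    have := fderiv_comp x (hf (fun i => φ i x)) hΦ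
    rw [show (fun y => f (fun i => φ i y)) = f ∘ (fun y => fun i => φ i y) from rfl,
      this]
    have hΦ0 : fderiv ℝ (fun y => fun i => φ i y) x (a x) = 0 := by
      funext i
      rw [fderiv_pi (fun i => hφd i x hx)]
      exact hφeq i x hx
    simp [hΦ0]
  rw [fderiv_fun_mul (hηd x hx) hF]
  simp only [ContinuousLinearMap.add_apply, ContinuousLinearMap.smul_apply,
    smul_eq_mul, hcomp]
  have h : fderiv ℝ η x (a x) = -(q x * η x) := by linarith [hηeq x hx]
  rw [h]; ring
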